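/- Let M = fromBlocks N₁₁ N₁₂ N₂₁ N₂₂ be a 2×2 block complex matrix and let N₂ be a matrix of the same size as N₂₂. If rank(fromBlocks 0 0 0 N₂ − M) = rank(N₂) − rank(M) (i.e., M is below fromBlocks 0 0 0 N₂ in the minus order), then N₁₁ = 0, N₁₂ = 0, N₂₁ = 0, and rank(N₂ − N₂₂) = rank(N₂) − rank(N₂₂) (i.e., N₂₂ ≤⁻ N₂). -/

import Mathlib

open Matrix Module

section Aux
variable {m n p q : Type*} [Fintype m] [Fintype n] [Fintype p] [Fintype q]
  [DecidableEq m] [DecidableEq n] [DecidableEq p] [DecidableEq q]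

lemma aux_rank_fromBlocks_zero (X : Matrix q q ℂ) :
    (Matrix.fromBlocks (0 : Matrix p p ℂ) 0 0 X).rank = X.rank := by
  have h1 : Matrix.fromBlocks (0 : Matrix p p ℂ) 0 0 X
      = fromRows (0 : Matrix p q ℂ) 1 * X * fromCols (0 : Matrix q p ℂ) 1 := by
    rw [fromRows_mul, Matrix.zero_mul, Matrix.one_mul, fromRows_mul_fromCols]
    simp
  have h2 : X = (fromCols (0 : Matrix q p ℂ) (1 : Matrix q q ℂ) : Matrix q (p ⊕ q) ℂ) *
      (Matrix.fromBlocks (0 : Matrix p p ℂ) 0 0 X : Matrix (p ⊕ q) (p ⊕ q) ℂ) * (fromRows (0 : Matrix p q ℂ) (1 : Matrix q q ℂ) : Matrix (p ⊕ q) q ℂ) := by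
    rw [fromCols_mul_fromBlocks, fromCols_mul_fromRows]
    simp
  refine le_antisymm ?_ ?_
  · rw [h1]
    exact (Matrix.rank_mul_le_left _ _).trans (Matrix.rank_mul_le_right _ _)
  · conv_lhs => rw [h2]
    exact (Matrix.rank_mul_le_left _ _).trans (Matrix.rank_mul_le_right _ _)

lemma aux_rank_eq_zero {X : Matrix m n ℂ} (h : X.rank = 0) : X = 0 := by
  have : LinearMap.range X.mulVecLin = ⊥ := Submodule.finrank_eq_zero.mp h
  ext i j
  have hv : X.mulVecLin (Pi.single j 1) = 0 := by
    have := this ▸ LinearMap.mem_range_self X.mulVecLin (Pi.single j 1)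
    simpa using this
  have := congrFun hv i
  simpa [Matrix.mulVecLin_apply, Matrix.mulVec_single] using this

lemma aux_rank_add_le (A C : Matrix m n ℂ) : (A + C).rank ≤ A.rank + C.rank := by
  have hsub : LinearMap.range (A + C).mulVecLin ≤
      LinearMap.range A.mulVecLin ⊔ LinearMap.range C.mulVecLin := by
    rintro _ ⟨v, rfl⟩
    rw [Matrix.mulVecLin_add]
    exact Submodule.add_mem_sup (LinearMap.mem_range_self _ v) (LinearMap.mem_range_self _ v)
  calc (A + C).rank ≤ finrank ℂ (LinearMap.range A.mulVecLin ⊔ LinearMap.range C.mulVecLin : Submodule ℂ (m → ℂ)) :=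
        Submodule.finrank_mono hsub
    _ ≤ A.rank + C.rank := by
        rw [Matrix.rank, Matrix.rank, ← Submodule.finrank_sup_add_finrank_inf_eq]
        exact Nat.le_add_right _ _

lemma aux_range_le (A C : Matrix m n ℂ)
    (h : (A + C).rank = A.rank + C.rank) :
    LinearMap.range A.mulVecLin ≤ LinearMap.range (A + C).mulVecLin := by
  have hsub : LinearMap.range (A + C).mulVecLin ≤
      LinearMap.range A.mulVecLin ⊔ LinearMap.range C.mulVecLin := by
    rintro _ ⟨v, rfl⟩
    rw [Matrix.mulVecLin_add]
    exact Submodule.add_mem_sup (LinearMap.mem_range_self _ v) (LinearMap.mem_range_self _ v)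
  have hfin : finrank ℂ (LinearMap.range A.mulVecLin ⊔ LinearMap.range C.mulVecLin : Submodule ℂ (m → ℂ))
      ≤ finrank ℂ (LinearMap.range (A + C).mulVecLin) := by
    rw [show finrank ℂ (LinearMap.range (A + C).mulVecLin) = (A+C).rank from rfl, h,
      Matrix.rank, Matrix.rank, ← Submodule.finrank_sup_add_finrank_inf_eq]
    exact Nat.le_add_right _ _
  have := Submodule.eq_of_le_of_finrank_le hsub hfin
  exact this ▸ le_sup_left

end Aux

/-- If the block matrix `M = fromBlocks N₁₁ N₁₂ N₂₁ N₂₂` is below `fromBlocks 0 0 0 N₂`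
in the minus order (`rank(fromBlocks 0 0 0 N₂ − M) = rank(N₂) − rank(M)`), then
`N₁₁ = 0`, `N₁₂ = 0`, `N₂₁ = 0` and `N₂₂ ≤⁻ N₂`. -/
theorem minus_order_block_diag {p q : Type*}
    [Fintype p] [Fintype q] [DecidableEq p] [DecidableEq q]
    (N₁₁ : Matrix p p ℂ) (N₁₂ : Matrix p q ℂ) (N₂₁ : Matrix q p ℂ) (N₂₂ N₂ : Matrix q q ℂ)
    (h : (Matrix.fromBlocks 0 0 0 N₂ - Matrix.fromBlocks N₁₁ N₁₂ N₂₁ N₂₂).rank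
        = N₂.rank - (Matrix.fromBlocks N₁₁ N₁₂ N₂₁ N₂₂).rank) :
    N₁₁ = 0 ∧ N₁₂ = 0 ∧ N₂₁ = 0 ∧ (N₂ - N₂₂).rank = N₂.rank - N₂₂.rank := by
  set M : Matrix (p ⊕ q) (p ⊕ q) ℂ := Matrix.fromBlocks N₁₁ N₁₂ N₂₁ N₂₂ with hMdef
  set B : Matrix (p ⊕ q) (p ⊕ q) ℂ := Matrix.fromBlocks 0 0 0 N₂ with hBdef
  have hB : B.rank = N₂.rank := aux_rank_fromBlocks_zero N₂
  have hMB : M + (B - M) = B := by abel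
  -- rank M ≤ rank N₂
  have hMle : M.rank ≤ N₂.rank := by
    by_contra hc
    push_neg at hc
    have h0 : (B - M).rank = 0 := by rw [h]; omega
    have : B - M = 0 := aux_rank_eq_zero h0
    have hBM : B = M := by
      have := sub_eq_zero.mp this; exact this.symm ▸ rfl
    rw [← hBM, hB] at hc
    exact absurd hc (lt_irrefl _)
  have hadd : (M + (B - M)).rank = M.rank + (B - M).rank := by
    rw [hMB, hB, h]; omega
  have hrange : LinearMap.range M.mulVecLin ≤ LinearMap.range B.mulVecLin := by
    have := aux_range_le M (B - M) hadd
    rwa [hMB] at this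
  -- transpose version
  have haddT : (Mᵀ + (Bᵀ - Mᵀ)).rank = Mᵀ.rank + (Bᵀ - Mᵀ).rank := by
    rw [show Mᵀ + (Bᵀ - Mᵀ) = Bᵀ by abel, Matrix.rank_transpose, ← Matrix.transpose_sub,
      Matrix.rank_transpose, Matrix.rank_transpose]
    rw [hMB] at hadd; exact hadd
  have hrangeT : LinearMap.range Mᵀ.mulVecLin ≤ LinearMap.range Bᵀ.mulVecLin := by
    have := aux_range_le Mᵀ (Bᵀ - Mᵀ) haddT
    rwa [show Mᵀ + (Bᵀ - Mᵀ) = Bᵀ by abel] at this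
  -- first block of B.mulVec is zero
  have hBzero : ∀ (v : p ⊕ q → ℂ) (i : p), B.mulVec v (Sum.inl i) = 0 := by
    intro v i
    simp [hBdef, Matrix.mulVec, dotProduct, Fintype.sum_sum_type]
  have hBTzero : ∀ (v : p ⊕ q → ℂ) (i : p), Bᵀ.mulVec v (Sum.inl i) = 0 := by
    intro v i
    simp [hBdef, Matrix.mulVec, dotProduct, Fintype.sum_sum_type]
  have hMzero : ∀ (v : p ⊕ q → ℂ) (i : p), M.mulVec v (Sum.inl i) = 0 := by
    intro v i
    obtain ⟨w, hw⟩ := hrange (LinearMap.mem_range_self M.mulVecLin v)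
    have := congrFun hw (Sum.inl i)
    simp only [Matrix.mulVecLin_apply] at this
    rw [← this]; exact hBzero w i
  have hMTzero : ∀ (v : p ⊕ q → ℂ) (i : p), Mᵀ.mulVec v (Sum.inl i) = 0 := by
    intro v i
    obtain ⟨w, hw⟩ := hrangeT (LinearMap.mem_range_self Mᵀ.mulVecLin v)
    have := congrFun hw (Sum.inl i)
    simp only [Matrix.mulVecLin_apply] at this
    rw [← this]; exact hBTzero w i
  have h11 : N₁₁ = 0 := by
    ext i j
    have := hMzero (Pi.single (Sum.inl j) 1) i
    rw [Matrix.mulVec_single] at this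
    simp only [hMdef] at this
    simpa using this
  have h12 : N₁₂ = 0 := by
    ext i j
    have := hMzero (Pi.single (Sum.inr j) 1) i
    rw [Matrix.mulVec_single] at this
    simp only [hMdef] at this
    simpa using this
  have h21 : N₂₁ = 0 := by
    ext i j
    have := hMTzero (Pi.single (Sum.inr i) 1) j
    rw [Matrix.mulVec_single] at this
    simp only [hMdef] at this
    simpa using this
  refine ⟨h11, h12, h21, ?_⟩
  have hM2 : M = Matrix.fromBlocks 0 0 0 N₂₂ := by rw [hMdef, h11, h12, h21]
  have hBM2 : B - M = Matrix.fromBlocks 0 0 0 (N₂ - N₂₂) := by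
    rw [hBdef, hM2]; ext (i | i) (j | j) <;> simp
  rw [hBM2, aux_rank_fromBlocks_zero] at h
  rw [hM2, aux_rank_fromBlocks_zero] at h
  exact h
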